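/- Define f₂ : ℝ → ℝ by f₂(x) = x² for x ≥ −1 and f₂(x) = 4√(−x) − 3 for x < −1. Then f₂ is differentiable on ℝ, its unique global minimizer is x⋆ = 0 with f₂(0) = 0, and f₂ is (1/2)-weakly quasi-convex: for all x ∈ ℝ, f₂′(x) · (x − 0) ≥ (1/2) f₂(x). In particular, for x < −1 this reads 2√(−x) ≥ (1/2)(4√(−x) − 3). -/

import Mathlib

/-- The function `f₂` (piecewise `x²` for `x ≥ −1` and `4√(−x) − 3` for `x < −1`)
is differentiable, has `0` as its unique global minimizer with `f₂(0) = 0`, and is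
`(1/2)`-weakly quasi-convex; in particular, for `x < −1` the weak quasi-convexity
inequality reads `2√(−x) ≥ (1/2)(4√(−x) − 3)`. -/
theorem f2_weakly_quasi_convex
    (f₂ : ℝ → ℝ)
    (hf₂ : ∀ x : ℝ, f₂ x = if -1 ≤ x then x ^ 2 else 4 * Real.sqrt (-x) - 3) :
    Differentiable ℝ f₂
    ∧ f₂ 0 = 0
    ∧ (∀ x : ℝ, x ≠ 0 → f₂ 0 < f₂ x)
    ∧ (∀ x : ℝ, (1 / 2) * f₂ x ≤ deriv f₂ x * (x - 0))
    ∧ (∀ x : ℝ, x < -1 → (1 / 2) * (4 * Real.sqrt (-x) - 3) ≤ 2 * Real.sqrt (-x)) := by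
  -- derivative of the sqrt branch at any x < 0 region point (we need x ≤ -1)
  have hsq : ∀ x : ℝ, x < 0 → HasDerivAt (fun y : ℝ => 4 * Real.sqrt (-y) - 3)
      (-2 / Real.sqrt (-x)) x := by
    intro x hx
    have hne : -x ≠ 0 := by linarith
    have h1 : HasDerivAt (fun y : ℝ => Real.sqrt (-y))
        (1 / (2 * Real.sqrt (-x)) * (-1)) x :=
      (Real.hasDerivAt_sqrt hne).comp x (hasDerivAt_neg x)
    have h2 := (h1.const_mul (4:ℝ)).sub_const 3
    convert h2 using 1
    · rfl
    · rfl
    have hpos : Real.sqrt (-x) > 0 := Real.sqrt_pos.mpr (by linarith)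
    field_simp
    ring
  have key : ∀ x : ℝ, HasDerivAt f₂ (if -1 ≤ x then 2 * x else -2 / Real.sqrt (-x)) x := by
    intro x
    rcases lt_trichotomy x (-1) with hx | hx | hx
    · rw [if_neg (by linarith)]
      apply (hsq x (by linarith)).congr_of_eventuallyEq
      filter_upwards [eventually_lt_nhds hx] with y hy
      rw [hf₂ y, if_neg (by linarith)]
    · subst hx
      rw [if_pos le_rfl]
      have hL : HasDerivWithinAt f₂ (2 * (-1:ℝ)) (Set.Iic (-1:ℝ)) (-1) := by
        have := hsq (-1) (by norm_num)
        rw [show (2 * (-1:ℝ)) = -2 / Real.sqrt (-(-1:ℝ)) by norm_num [Real.sqrt_one]]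
        refine this.hasDerivWithinAt.congr (fun y hy => ?_) ?_
        · rw [hf₂ y]
          rcases eq_or_lt_of_le (show y ≤ (-1:ℝ) from hy) with h | h
          · subst h; norm_num [Real.sqrt_one]
          · rw [if_neg (by linarith)]
        · rw [hf₂ (-1)]; norm_num [Real.sqrt_one]
      have hR : HasDerivWithinAt f₂ (2 * (-1:ℝ)) (Set.Ici (-1:ℝ)) (-1) := by
        have h : HasDerivAt (fun y : ℝ => y ^ 2) (2 * (-1:ℝ)) (-1) := by
          simpa using (hasDerivAt_pow 2 (-1:ℝ))
        refine h.hasDerivWithinAt.congr (fun y hy => ?_) ?_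
        · rw [hf₂ y, if_pos (show (-1:ℝ) ≤ y from hy)]
        · rw [hf₂ (-1)]; norm_num
      have := hL.union hR
      rw [Set.Iic_union_Ici] at this
      exact hasDerivWithinAt_univ.mp this
    · rw [if_pos (by linarith)]
      have h : HasDerivAt (fun y : ℝ => y ^ 2) (2 * x) x := by
        simpa using (hasDerivAt_pow 2 x)
      apply h.congr_of_eventuallyEq
      filter_upwards [eventually_gt_nhds hx] with y hy
      rw [hf₂ y, if_pos (by linarith)]
  have hderiv : ∀ x : ℝ, deriv f₂ x = if -1 ≤ x then 2 * x else -2 / Real.sqrt (-x) :=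
    fun x => (key x).deriv
  refine ⟨fun x => (key x).differentiableAt, ?_, ?_, ?_, ?_⟩
  · rw [hf₂ 0]; norm_num
  · intro x hx
    rw [hf₂ 0, hf₂ x]
    norm_num
    split_ifs with h
    · positivity
    · push_neg at h
      have : (1:ℝ) ≤ Real.sqrt (-x) := by
        rw [show (1:ℝ) = Real.sqrt 1 from (Real.sqrt_one).symm]
        exact Real.sqrt_le_sqrt (by linarith)
      linarith
  · intro x
    rw [hderiv x, hf₂ x]
    split_ifs with h
    · nlinarith [sq_nonneg x]
    · push_neg at h
      have hpos : Real.sqrt (-x) > 0 := Real.sqrt_pos.mpr (by linarith)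
      have hsq : Real.sqrt (-x) * Real.sqrt (-x) = -x := Real.mul_self_sqrt (by linarith)
      have h1 : (1:ℝ) ≤ Real.sqrt (-x) := by
        rw [show (1:ℝ) = Real.sqrt 1 from (Real.sqrt_one).symm]
        exact Real.sqrt_le_sqrt (by linarith)
      have heq : -2 / Real.sqrt (-x) * (x - 0) = 2 * Real.sqrt (-x) := by
        rw [sub_zero, div_mul_eq_mul_div, div_eq_iff hpos.ne']; nlinarith
      rw [heq]; linarith
  · intro x hx
    have : Real.sqrt (-x) ≥ 0 := Real.sqrt_nonneg _
    linarith
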